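/- Consider the Markov chain (Z_t) on {0, 1, …, n} (n ≥ 2 even) where from state z > n/2, Z_{t+1} = z − 1 with probability z/n and Z_{t+1} = z + 1 with probability (n−z)/n. Let T = inf{t : Z_t ≤ n/2}. Then for any starting state z_0 with z_0 ≥ n/2 + 1, E[T] ≤ (n/2)·(1 + ln(z_0 − n/2)). -/

import Mathlib

open MeasureTheory Filter Set ENNReal

noncomputable def gpot (h z : ℕ) : ℝ := if h < z then 1 + Real.log (z - h) else 0

lemma gpot_nonneg (h z : ℕ) : 0 ≤ gpot h z := by
  unfold gpot
  split
  · rename_i hz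
    have h1 : (1:ℝ) ≤ (z:ℝ) - h := by
      have : (h:ℝ) + 1 ≤ z := by exact_mod_cast hz
      linarith
    have := Real.log_nonneg h1
    linarith
  · exact le_refl 0

lemma gpot_le (h z m : ℕ) (hm : 1 ≤ m) (hzm : z ≤ m) : gpot h z ≤ 1 + Real.log m := by
  unfold gpot
  have hlogm : 0 ≤ Real.log m := Real.log_nonneg (by exact_mod_cast hm)
  split
  · rename_i hz
    have h1 : (1:ℝ) ≤ (z:ℝ) - h := by
      have : (h:ℝ) + 1 ≤ z := by exact_mod_cast hz
      linarith
    have h2 : (z:ℝ) - h ≤ m := by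
      have h3 : (z:ℝ) ≤ m := by exact_mod_cast hzm
      have h4 : (0:ℝ) ≤ h := by positivity
      linarith
    have := Real.log_le_log (by linarith) h2
    linarith
  · linarith

lemma gpot_drift (h z : ℕ) (hh : 1 ≤ h) (hz1 : h < z) (hz2 : z ≤ 2*h) :
    (z : ℝ)/(2*h) * gpot h (z-1) + ((2*(h:ℝ)) - z)/(2*h) * gpot h (z+1)
      ≤ gpot h z - 2/(2*h) := by
  have hh0 : (0:ℝ) < h := by exact_mod_cast hh
  have hn0 : (0:ℝ) < 2*h := by linarith
  have hz2' : (z:ℝ) ≤ 2*h := by exact_mod_cast hz2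
  rcases eq_or_lt_of_le (Nat.succ_le_of_lt hz1) with he | hlt
  · -- z = h + 1
    have g1 : gpot h (z-1) = 0 := by
      unfold gpot; rw [if_neg]; omega
    have g2 : gpot h (z+1) = 1 + Real.log 2 := by
      unfold gpot; rw [if_pos (by omega)]
      congr 1
      have : ((z:ℝ)+1) - h = 2 := by
        have : (z:ℝ) = (h:ℝ) + 1 := by exact_mod_cast he.symm
        linarith
      push_cast
      rw [this]
    have g3 : gpot h z = 1 := by
      unfold gpot; rw [if_pos hz1]
      have : ((z:ℝ)) - h = 1 := by
        have : (z:ℝ) = (h:ℝ) + 1 := by exact_mod_cast he.symm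
        linarith
      rw [this, Real.log_one]; ring
    rw [g1, g2, g3]
    have l2 : Real.log 2 ≤ 1 := by
      have := Real.log_le_sub_one_of_pos (by norm_num : (0:ℝ) < 2)
      linarith
    have l2' : (0:ℝ) ≤ Real.log 2 := Real.log_nonneg (by norm_num)
    have hze : (z:ℝ) = (h:ℝ) + 1 := by exact_mod_cast he.symm
    rw [hze]
    have key : (2*(h:ℝ) - ((h:ℝ)+1)) * (1+Real.log 2) ≤ (1 - 2/(2*(h:ℝ)))*(2*(h:ℝ)) := by
      have e : (1 - 2/(2*(h:ℝ)))*(2*(h:ℝ)) = 2*(h:ℝ) - 2 := by field_simp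
      rw [e]; nlinarith
    rw [mul_zero, zero_add, div_mul_eq_mul_div, div_le_iff₀ hn0]
    exact key
  · -- h + 2 ≤ z
    have hlt' : (h:ℝ) + 2 ≤ z := by exact_mod_cast hlt
    have h1z : 1 ≤ z := by omega
    have hcast1 : ((z-1:ℕ):ℝ) = (z:ℝ) - 1 := by
      push_cast [h1z]; ring
    have g1 : gpot h (z-1) = 1 + Real.log ((z:ℝ) - 1 - h) := by
      unfold gpot; rw [if_pos (by omega : h < z-1), hcast1]; try ring_nf
    have g2 : gpot h (z+1) = 1 + Real.log ((z:ℝ) + 1 - h) := by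
      unfold gpot; rw [if_pos (by omega)]; push_cast; try ring_nf
    have g3 : gpot h z = 1 + Real.log ((z:ℝ) - h) := by
      unfold gpot; rw [if_pos hz1]
    have hxpos : (0:ℝ) < (z:ℝ) - h := by linarith
    have hx1pos : (0:ℝ) < (z:ℝ) - 1 - h := by linarith
    have b1 : Real.log ((z:ℝ) - 1 - h) ≤ Real.log ((z:ℝ) - h) - 1/((z:ℝ)-h) := by
      have hq := Real.log_le_sub_one_of_pos (div_pos hx1pos hxpos)
      rw [Real.log_div (ne_of_gt hx1pos) (ne_of_gt hxpos)] at hq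
      have e : ((z:ℝ)-1-h)/((z:ℝ)-h) - 1 = -(1/((z:ℝ)-h)) := by field_simp; try ring
      linarith
    have b2 : Real.log ((z:ℝ) + 1 - h) ≤ Real.log ((z:ℝ) - h) + 1/((z:ℝ)-h) := by
      have hq := Real.log_le_sub_one_of_pos (div_pos (show (0:ℝ) < (z:ℝ)+1-(h:ℝ) by linarith) hxpos)
      rw [Real.log_div (by linarith) (ne_of_gt hxpos)] at hq
      have e : ((z:ℝ)+1-h)/((z:ℝ)-h) - 1 = 1/((z:ℝ)-h) := by field_simp; try ring
      linarith
    have c1 : (0:ℝ) ≤ (z:ℝ)/(2*h) := by positivity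
    have c2 : (0:ℝ) ≤ (2*(h:ℝ)-z)/(2*h) := by
      apply div_nonneg _ (le_of_lt hn0); linarith
    rw [g1, g2, g3]
    have e1 := mul_le_mul_of_nonneg_left
      (show 1 + Real.log ((z:ℝ)-1-h) ≤ 1 + Real.log ((z:ℝ)-h) - 1/((z:ℝ)-h) by linarith) c1
    have e2 := mul_le_mul_of_nonneg_left
      (show 1 + Real.log ((z:ℝ)+1-h) ≤ 1 + Real.log ((z:ℝ)-h) + 1/((z:ℝ)-h) by linarith) c2
    have e3 : (z:ℝ)/(2*h) * (1 + Real.log ((z:ℝ)-h) - 1/((z:ℝ)-h))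
        + (2*(h:ℝ)-z)/(2*h) * (1 + Real.log ((z:ℝ)-h) + 1/((z:ℝ)-h))
        = 1 + Real.log ((z:ℝ)-h) - 2/(2*h) := by
      field_simp
      ring
    linarith

lemma lt_sInf_image_iff (S : Set ℕ) (t : ℕ) :
    (t : ℕ∞) < sInf ((↑) '' S) ↔ ∀ s ∈ S, t < s := by
  constructor
  · intro hlt s hs
    by_contra hc
    push_neg at hc
    have h1 : sInf ((↑) '' S : Set ℕ∞) ≤ (s : ℕ∞) := sInf_le (mem_image_of_mem _ hs)
    have h2 : (s : ℕ∞) ≤ (t : ℕ∞) := by exact_mod_cast hc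
    exact absurd (lt_of_lt_of_le hlt (le_trans h1 h2)) (lt_irrefl _)
  · intro H
    rw [← ENat.add_one_le_iff (by simp : (t:ℕ∞) ≠ ⊤)]
    apply le_sInf
    rintro b ⟨s, hs, rfl⟩
    have : t < s := H s hs
    exact_mod_cast this

lemma enat_toENNReal_eq_tsum (a : ℕ∞) :
    (a : ℝ≥0∞) = ∑' t : ℕ, if (t:ℕ∞) < a then (1:ℝ≥0∞) else 0 := by
  induction a using ENat.recTopCoe with
  | top =>
    simp only [ENat.coe_lt_top, if_true]
    rw [ENNReal.tsum_const_eq_top_of_ne_zero one_ne_zero]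
    simp
  | coe k =>
    have : ∀ t : ℕ, (if (t:ℕ∞) < (k:ℕ∞) then (1:ℝ≥0∞) else 0)
        = if t ∈ Finset.range k then (1:ℝ≥0∞) else 0 := by
      intro t; simp [Nat.cast_lt]
    rw [tsum_congr (fun t => this t), tsum_eq_sum (s := Finset.range k) (by intro t ht; simp [ht])]
    rw [Finset.sum_ite_of_true (fun t ht => ht), Finset.sum_const, Finset.card_range]
    simp

/-- RLS on Majority_0 starting with a majority of zeros: expected time to reach a
balanced string is at most `(n/2)(1 + ln(z₀ - n/2))`. -/
theorem rls_majority_return_time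
    {Ω : Type*} {m0' : MeasurableSpace Ω} (μ : Measure Ω) [IsProbabilityMeasure μ]
    (ℱ : Filtration ℕ m0') (n : ℕ) (hn : 2 ≤ n) (heven : Even n)
    (Z : ℕ → Ω → ℕ) (hadapt : Adapted ℱ fun t ω => (Z t ω : ℝ))
    (hrange : ∀ t ω, Z t ω ≤ n)
    (hdown : ∀ t : ℕ, ∀ᵐ ω ∂μ, n / 2 < Z t ω →
      (μ[Set.indicator {ω' | Z (t + 1) ω' = Z t ω' - 1} (fun _ => (1 : ℝ)) | ℱ t]) ω
        = (Z t ω : ℝ) / n)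
    (hup : ∀ t : ℕ, ∀ᵐ ω ∂μ, n / 2 < Z t ω →
      (μ[Set.indicator {ω' | Z (t + 1) ω' = Z t ω' + 1} (fun _ => (1 : ℝ)) | ℱ t]) ω
        = ((n : ℝ) - Z t ω) / n)
    (z₀ : ℕ) (hz0 : n / 2 + 1 ≤ z₀) (hZ0 : ∀ ω, Z 0 ω = z₀)
    (T : Ω → ℕ∞)
    (hT : ∀ ω, T ω = sInf ((↑) '' {t : ℕ | Z t ω ≤ n / 2})) :
    ∫⁻ ω, (T ω : ℝ≥0∞) ∂μ ≤
      ENNReal.ofReal (((n : ℝ) / 2) * (1 + Real.log ((z₀ : ℝ) - (n : ℝ) / 2))) := by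
  classical
  set h : ℕ := n / 2 with hhdef
  have hnh : n = 2 * h := by obtain ⟨k, hk⟩ := heven; omega
  have hh1 : 1 ≤ h := by omega
  have hn0 : (0:ℝ) < n := by positivity
  have hhR : ((h:ℝ)) = (n:ℝ) / 2 := by
    rw [hnh]; push_cast; ring
  -- measurability of Z
  have hZmeasF : ∀ t, Measurable[ℱ t] (Z t) := by
    intro t
    have hm : Measurable[ℱ t] (fun ω => (Z t ω : ℝ)) := hadapt t
    have : Z t = (fun x : ℝ => ⌊x⌋₊) ∘ (fun ω => (Z t ω : ℝ)) := by
      funext ω; simp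
    rw [this]
    exact Nat.measurable_floor.comp hm
  have hZmeas : ∀ t, Measurable (Z t) := fun t => (hZmeasF t).mono (ℱ.le t) le_rfl
  -- the events A t = {T > t}
  set A : ℕ → Set Ω := fun t => {ω | ∀ s ≤ t, h < Z s ω} with hAdef
  have hA_measF : ∀ t, MeasurableSet[ℱ t] (A t) := by
    intro t
    have : A t = ⋂ s ∈ Finset.range (t+1), (Z s) ⁻¹' (Set.Ioi h) := by
      ext ω
      simp [hAdef, Nat.lt_succ_iff]
    rw [this]
    apply MeasurableSet.biInter (Set.to_countable _)
    intro s hs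
    have hs' : s ≤ t := by have := Finset.mem_range.mp hs; omega
    exact ((hZmeasF s).mono (ℱ.mono hs') le_rfl) ((Set.to_countable _).measurableSet)
  have hA_meas : ∀ t, MeasurableSet (A t) := fun t => (ℱ.le t) _ (hA_measF t)
  have hA_anti : ∀ t, A (t+1) ⊆ A t := by
    intro t ω hω s hs
    exact hω s (le_trans hs (Nat.le_succ t))
  have hAT : ∀ t ω, ω ∈ A t ↔ (t:ℕ∞) < T ω := by
    intro t ω
    rw [hT ω, lt_sInf_image_iff]
    constructor
    · intro hA s hs
      by_contra hc
      push_neg at hc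
      exact absurd hs (by simpa using (hA s hc).not_ge)
    · intro H s hst
      by_contra hc
      push_neg at hc
      exact absurd (H s hc) (by omega)
  -- bound
  set B : ℝ := 1 + Real.log (n+1) with hBdef
  have hB0 : 0 ≤ B := by
    have : (0:ℝ) ≤ Real.log (n+1) := Real.log_nonneg (by have := Nat.cast_nonneg (α := ℝ) n; linarith)
    simp [hBdef]; linarith
  -- integrability helper
  have hint : ∀ (f : Ω → ℝ) (C : ℝ), Measurable f → (∀ ω, ‖f ω‖ ≤ C) → Integrable f μ := by
    intro f C hf hb
    exact (integrable_const C).mono' hf.aestronglyMeasurable (Eventually.of_forall hb)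
  have hgb : ∀ (k : ℕ) ω, ‖gpot h (Z k ω + 1)‖ ≤ B ∧ ‖gpot h (Z k ω)‖ ≤ B ∧ ‖gpot h (Z k ω - 1)‖ ≤ B := by
    intro k ω
    have hb : ∀ z : ℕ, z ≤ n + 1 → ‖gpot h z‖ ≤ B := by
      intro z hz
      rw [Real.norm_eq_abs, abs_of_nonneg (gpot_nonneg h z)]
      refine le_trans (gpot_le h z (n+1) (by omega) hz) ?_
      rw [hBdef]
      push_cast
      exact le_refl _
    exact ⟨hb _ (by have := hrange k ω; omega), hb _ (by have := hrange k ω; omega),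
      hb _ (by have := hrange k ω; omega)⟩
  have hgmeas : ∀ (k : ℕ) (f : ℕ → ℕ), Measurable (fun ω => gpot h (f (Z k ω))) :=
    fun k f => (measurable_from_top (f := fun z => gpot h (f z))).comp (hZmeas k)
  -- the key step inequality
  have step : ∀ t, (2/(n:ℝ)) * (μ (A t)).toReal + ∫ ω in A (t+1), gpot h (Z (t+1) ω) ∂μ
      ≤ ∫ ω in A t, gpot h (Z t ω) ∂μ := by
    intro t
    have hDmeas : MeasurableSet {ω' | Z (t + 1) ω' = Z t ω' - 1} := by
      have : {ω' | Z (t + 1) ω' = Z t ω' - 1}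
          = (fun ω => (Z (t+1) ω, Z t ω)) ⁻¹' {p : ℕ × ℕ | p.1 = p.2 - 1} := rfl
      rw [this]
      exact ((hZmeas (t+1)).prodMk (hZmeas t)) ((Set.to_countable _).measurableSet)
    have hUmeas : MeasurableSet {ω' | Z (t + 1) ω' = Z t ω' + 1} := by
      have : {ω' | Z (t + 1) ω' = Z t ω' + 1}
          = (fun ω => (Z (t+1) ω, Z t ω)) ⁻¹' {p : ℕ × ℕ | p.1 = p.2 + 1} := rfl
      rw [this]
      exact ((hZmeas (t+1)).prodMk (hZmeas t)) ((Set.to_countable _).measurableSet)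
    have hCmeas : MeasurableSet ({ω' | Z (t + 1) ω' = Z t ω' - 1} ∪ {ω' | Z (t + 1) ω' = Z t ω' + 1})ᶜ :=
      (hDmeas.union hUmeas).compl
    -- notation
    let D : Set Ω := {ω' | Z (t + 1) ω' = Z t ω' - 1}
    let U : Set Ω := {ω' | Z (t + 1) ω' = Z t ω' + 1}
    let C : Set Ω := (D ∪ U)ᶜ
    let oneD : Ω → ℝ := D.indicator (fun _ => (1:ℝ))
    let oneU : Ω → ℝ := U.indicator (fun _ => (1:ℝ))
    let oneC : Ω → ℝ := C.indicator (fun _ => (1:ℝ))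
    let f : Ω → ℝ := fun ω => gpot h (Z (t+1) ω)
    let f1 : Ω → ℝ := fun ω => gpot h (Z t ω - 1)
    let f2 : Ω → ℝ := fun ω => gpot h (Z t ω + 1)
    have hDU : ∀ ω, ω ∈ D → ω ∈ U → False := by
      intro ω h1 h2
      have h1' : Z (t+1) ω = Z t ω - 1 := h1
      have h2' : Z (t+1) ω = Z t ω + 1 := h2
      omega
    have hind_int : ∀ (S : Set Ω), MeasurableSet S → Integrable (S.indicator (fun _ => (1:ℝ))) μ := by
      intro S hS
      refine hint _ 1 (measurable_const.indicator hS) ?_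
      intro ω
      by_cases hω : ω ∈ S <;> simp [Set.indicator_apply, hω]
    have hfint : Integrable f μ := hint f B (hgmeas (t+1) id) (fun ω => (hgb (t+1) ω).2.1)
    have hf1meas : Measurable f1 := hgmeas t (fun z => z - 1)
    have hf2meas : Measurable f2 := hgmeas t (fun z => z + 1)
    have hf1b : ∀ ω, ‖f1 ω‖ ≤ B := fun ω => (hgb t ω).2.2
    have hf2b : ∀ ω, ‖f2 ω‖ ≤ B := fun ω => (hgb t ω).1
    have hfb : ∀ ω, ‖f ω‖ ≤ B := fun ω => (hgb (t+1) ω).2.1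
    have hmul_bound : ∀ (g : Ω → ℝ) (S : Set Ω), (∀ ω, ‖g ω‖ ≤ B) →
        (∀ ω, ‖(g * S.indicator (fun _ => (1:ℝ))) ω‖ ≤ B) := by
      intro g S hg ω
      by_cases hω : ω ∈ S
      · simpa [Pi.mul_apply, Set.indicator_of_mem hω] using hg ω
      · simp [Pi.mul_apply, Set.indicator_of_notMem hω, hB0]
    have hF1int : Integrable (f1 * oneD) μ :=
      hint _ B (hf1meas.mul (measurable_const.indicator hDmeas)) (hmul_bound f1 D hf1b)
    have hF2int : Integrable (f2 * oneU) μ :=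
      hint _ B (hf2meas.mul (measurable_const.indicator hUmeas)) (hmul_bound f2 U hf2b)
    have hF3int : Integrable (f * oneC) μ :=
      hint _ B ((hgmeas (t+1) id).mul (measurable_const.indicator hCmeas)) (hmul_bound f C hfb)
    have hdecomp : f = f1 * oneD + f2 * oneU + f * oneC := by
      funext ω
      by_cases hD : ω ∈ D
      · have hU : ω ∉ U := fun hU => hDU ω hD hU
        have hC : ω ∉ C := by simp [C, Set.mem_compl_iff, hD]
        simp only [Pi.add_apply, Pi.mul_apply, oneD, oneU, oneC, f, f1, f2,
          Set.indicator_of_mem hD, Set.indicator_of_notMem hU, Set.indicator_of_notMem hC,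
          mul_one, mul_zero, add_zero, zero_add]
        have hD' : Z (t+1) ω = Z t ω - 1 := hD
        rw [hD']
      · by_cases hU : ω ∈ U
        · have hC : ω ∉ C := by simp [C, Set.mem_compl_iff, hU]
          simp only [Pi.add_apply, Pi.mul_apply, oneD, oneU, oneC, f, f1, f2,
            Set.indicator_of_mem hU, Set.indicator_of_notMem hD, Set.indicator_of_notMem hC,
            mul_one, mul_zero, add_zero, zero_add]
          have hU' : Z (t+1) ω = Z t ω + 1 := hU
          rw [hU']
        · have hC : ω ∈ C := by simp [C, Set.mem_compl_iff, hD, hU]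
          simp only [Pi.add_apply, Pi.mul_apply, oneD, oneU, oneC, f, f1, f2,
            Set.indicator_of_mem hC, Set.indicator_of_notMem hU, Set.indicator_of_notMem hD,
            mul_one, mul_zero, add_zero, zero_add]
    have hce1 : μ[f1 * oneD | ℱ t] =ᵐ[μ] f1 * μ[oneD | ℱ t] :=
      condExp_mul_of_stronglyMeasurable_left
        (Measurable.stronglyMeasurable
          ((measurable_from_top (f := fun z => gpot h (z - 1))).comp (hZmeasF t)))
        hF1int (hind_int D hDmeas)
    have hce2 : μ[f2 * oneU | ℱ t] =ᵐ[μ] f2 * μ[oneU | ℱ t] :=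
      condExp_mul_of_stronglyMeasurable_left
        (Measurable.stronglyMeasurable
          ((measurable_from_top (f := fun z => gpot h (z + 1))).comp (hZmeasF t)))
        hF2int (hind_int U hUmeas)
    have hce3bound : μ[f * oneC | ℱ t] ≤ᵐ[μ] μ[B • oneC | ℱ t] := by
      apply condExp_mono hF3int ((hind_int C hCmeas).smul B)
      apply Eventually.of_forall
      intro ω
      by_cases hω : ω ∈ C
      · have h1 : f ω ≤ B := le_trans (le_abs_self _) (hfb ω)
        simp only [Pi.mul_apply, Pi.smul_apply, oneC, Set.indicator_of_mem hω,
          smul_eq_mul, mul_one]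
        exact h1
      · simp [Pi.mul_apply, Pi.smul_apply, oneC, Set.indicator_of_notMem hω]
    have hsmulC : μ[B • oneC | ℱ t] =ᵐ[μ] B • μ[oneC | ℱ t] := condExp_smul B oneC _
    have honeC : oneC = (fun _ => (1:ℝ)) - oneD - oneU := by
      funext ω
      by_cases hD : ω ∈ D
      · have hU : ω ∉ U := fun hU => hDU ω hD hU
        have hC : ω ∉ C := by simp [C, Set.mem_compl_iff, hD]
        simp [oneC, oneD, oneU, Set.indicator_of_mem hD, Set.indicator_of_notMem hU,
          Set.indicator_of_notMem hC]
      · by_cases hU : ω ∈ U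
        · have hC : ω ∉ C := by simp [C, Set.mem_compl_iff, hU]
          simp [oneC, oneD, oneU, Set.indicator_of_mem hU, Set.indicator_of_notMem hD,
            Set.indicator_of_notMem hC]
        · have hC : ω ∈ C := by simp [C, Set.mem_compl_iff, hD, hU]
          simp [oneC, oneD, oneU, Set.indicator_of_mem hC, Set.indicator_of_notMem hD,
            Set.indicator_of_notMem hU]
    have hceC : μ[oneC | ℱ t] =ᵐ[μ] (fun _ => (1:ℝ)) - μ[oneD | ℱ t] - μ[oneU | ℱ t] := by
      rw [honeC]
      calc μ[(fun _ => (1:ℝ)) - oneD - oneU | ℱ t]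
          =ᵐ[μ] μ[(fun _ => (1:ℝ)) - oneD | ℱ t] - μ[oneU | ℱ t] :=
            condExp_sub ((integrable_const 1).sub (hind_int D hDmeas)) (hind_int U hUmeas) _
        _ =ᵐ[μ] ((fun _ => (1:ℝ)) - μ[oneD | ℱ t]) - μ[oneU | ℱ t] := by
            filter_upwards [condExp_sub (integrable_const (1:ℝ)) (hind_int D hDmeas) _] with ω hω
            have hconst : μ[(fun _ : Ω => (1:ℝ)) | ℱ t] = fun _ => (1:ℝ) :=
              condExp_const (ℱ.le t) 1
            simp only [Pi.sub_apply] at hω ⊢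
            rw [hω, hconst]
    have hceF : μ[f | ℱ t] =ᵐ[μ] μ[f1 * oneD | ℱ t] + μ[f2 * oneU | ℱ t] + μ[f * oneC | ℱ t] := by
      conv_lhs => rw [hdecomp]
      calc μ[f1 * oneD + f2 * oneU + f * oneC | ℱ t]
          =ᵐ[μ] μ[f1 * oneD + f2 * oneU | ℱ t] + μ[f * oneC | ℱ t] :=
            condExp_add (hF1int.add hF2int) hF3int _
        _ =ᵐ[μ] μ[f1 * oneD | ℱ t] + μ[f2 * oneU | ℱ t] + μ[f * oneC | ℱ t] := by
            filter_upwards [condExp_add hF1int hF2int _] with ω hω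
            simp only [Pi.add_apply] at hω ⊢
            rw [hω]
    -- a.e. bound on A t
    have haeA : ∀ᵐ ω ∂μ, ω ∈ A t → (μ[f | ℱ t]) ω ≤ gpot h (Z t ω) - 2/(n:ℝ) := by
      filter_upwards [hdown t, hup t, hceF, hce1, hce2, hce3bound, hsmulC, hceC]
        with ω hdn hupω e0 e1 e2 e3 e4 e5 hωA
      have hzgt : h < Z t ω := hωA t le_rfl
      have hd : (μ[oneD | ℱ t]) ω = (Z t ω : ℝ) / n := hdn hzgt
      have hu : (μ[oneU | ℱ t]) ω = ((n:ℝ) - Z t ω) / n := hupω hzgt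
      have hC0 : (μ[oneC | ℱ t]) ω = 0 := by
        rw [e5]
        simp only [Pi.sub_apply]
        rw [hd, hu]
        field_simp
        ring
      have hF3le : (μ[f * oneC | ℱ t]) ω ≤ 0 := by
        refine le_trans e3 ?_
        rw [e4]
        simp only [Pi.smul_apply, smul_eq_mul]
        rw [hC0, mul_zero]
      have hzn : Z t ω ≤ 2 * h := by rw [← hnh]; exact hrange t ω
      have hdrift := gpot_drift h (Z t ω) hh1 hzgt hzn
      have h2h : (2:ℝ) * h = (n:ℝ) := by rw [hnh]; push_cast; ring
      rw [h2h] at hdrift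
      rw [e0]
      simp only [Pi.add_apply]
      rw [e1, e2]
      simp only [Pi.mul_apply]
      rw [hd, hu]
      have heq1 : f1 ω * ((Z t ω : ℝ) / n) = (Z t ω : ℝ) / n * gpot h (Z t ω - 1) := by
        simp only [f1]; ring
      have heq2 : f2 ω * (((n:ℝ) - Z t ω) / n) = ((2*(h:ℝ)) - Z t ω) / n * gpot h (Z t ω + 1) := by
        simp only [f2, h2h]; ring
      rw [heq1, heq2, h2h]
      linarith
    -- integral chain
    have hgtint : Integrable (fun ω => gpot h (Z t ω)) μ :=
      hint _ B (hgmeas t id) (fun ω => (hgb t ω).2.1)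
    have c1 : ∫ ω in A (t+1), f ω ∂μ ≤ ∫ ω in A t, f ω ∂μ :=
      setIntegral_mono_set hfint.integrableOn
        (ae_of_all _ (fun ω => gpot_nonneg _ _))
        (HasSubset.Subset.eventuallyLE (hA_anti t))
    have c2 : ∫ ω in A t, f ω ∂μ = ∫ ω in A t, (μ[f | ℱ t]) ω ∂μ :=
      (setIntegral_condExp (ℱ.le t) hfint (hA_measF t)).symm
    have c3 : ∫ ω in A t, (μ[f | ℱ t]) ω ∂μ
        ≤ ∫ ω in A t, (gpot h (Z t ω) - 2/(n:ℝ)) ∂μ := by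
      refine setIntegral_mono_ae_restrict integrable_condExp.integrableOn
        ((hgtint.sub (integrable_const _)).integrableOn) ?_
      exact (ae_restrict_iff' (hA_meas t)).mpr haeA
    have c4 : ∫ ω in A t, (gpot h (Z t ω) - 2/(n:ℝ)) ∂μ
        = ∫ ω in A t, gpot h (Z t ω) ∂μ - (2/(n:ℝ)) * (μ (A t)).toReal := by
      rw [integral_sub hgtint.integrableOn (integrable_const _).integrableOn,
        setIntegral_const, smul_eq_mul]
      rw [measureReal_def]
      ring
    have hAmono : (μ (A (t+1))).toReal ≤ (μ (A t)).toReal := by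
      exact ENNReal.toReal_mono (measure_ne_top μ _) (measure_mono (hA_anti t))
    linarith [c1, c2.le, c2.ge, c3, c4.le, c4.ge]
  -- telescoping
  have telescope : ∀ N : ℕ, (2/(n:ℝ)) * ∑ t ∈ Finset.range N, (μ (A t)).toReal
      + ∫ ω in A N, gpot h (Z N ω) ∂μ ≤ gpot h z₀ := by
    intro N
    have base : ∫ ω in A 0, gpot h (Z 0 ω) ∂μ ≤ gpot h z₀ := by
      have : ∀ ω, gpot h (Z 0 ω) = gpot h z₀ := fun ω => by rw [hZ0 ω]
      rw [setIntegral_congr_fun (hA_meas 0) (fun ω _ => this ω), setIntegral_const]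
      have h1 : (μ (A 0)).toReal ≤ 1 := by
        have hle : μ (A 0) ≤ 1 := prob_le_one
        simpa using ENNReal.toReal_mono ENNReal.one_ne_top hle
      have h2 := gpot_nonneg h z₀
      calc (μ (A 0)).toReal • gpot h z₀ ≤ 1 * gpot h z₀ := by
            rw [smul_eq_mul]; exact mul_le_mul_of_nonneg_right h1 h2
        _ = gpot h z₀ := one_mul _
    induction N with
    | zero => simpa using base
    | succ N ih =>
      have := step N
      rw [Finset.sum_range_succ, mul_add]
      linarith
  -- partial sums of measures
  have partial_bound : ∀ N : ℕ, ∑ t ∈ Finset.range N, μ (A t)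
      ≤ ENNReal.ofReal (((n:ℝ)/2) * gpot h z₀) := by
    intro N
    have h1 : ∑ t ∈ Finset.range N, (μ (A t)).toReal ≤ ((n:ℝ)/2) * gpot h z₀ := by
      have h2 : (0:ℝ) ≤ ∫ ω in A N, gpot h (Z N ω) ∂μ :=
        setIntegral_nonneg (hA_meas N) (fun ω _ => gpot_nonneg _ _)
      have h3 := telescope N
      have h4 : (2/(n:ℝ)) * ∑ t ∈ Finset.range N, (μ (A t)).toReal ≤ gpot h z₀ := by linarith
      have h5 := mul_le_mul_of_nonneg_left h4 (by positivity : (0:ℝ) ≤ (n:ℝ)/2)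
      have h6 : ((n:ℝ)/2) * ((2/(n:ℝ)) * ∑ t ∈ Finset.range N, (μ (A t)).toReal)
          = ∑ t ∈ Finset.range N, (μ (A t)).toReal := by
        field_simp
      linarith
    calc ∑ t ∈ Finset.range N, μ (A t)
        = ∑ t ∈ Finset.range N, ENNReal.ofReal ((μ (A t)).toReal) := by
          apply Finset.sum_congr rfl
          intro t _
          rw [ENNReal.ofReal_toReal (measure_ne_top μ _)]
      _ = ENNReal.ofReal (∑ t ∈ Finset.range N, (μ (A t)).toReal) :=
          (ENNReal.ofReal_sum_of_nonneg (fun t _ => ENNReal.toReal_nonneg)).symm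
      _ ≤ ENNReal.ofReal (((n:ℝ)/2) * gpot h z₀) := ENNReal.ofReal_le_ofReal h1
  -- expected value as tsum
  have hTsum : ∫⁻ ω, (T ω : ℝ≥0∞) ∂μ = ∑' t : ℕ, μ (A t) := by
    have hpt : ∀ ω, (T ω : ℝ≥0∞) = ∑' t : ℕ, (A t).indicator (fun _ => (1:ℝ≥0∞)) ω := by
      intro ω
      rw [enat_toENNReal_eq_tsum]
      apply tsum_congr
      intro t
      by_cases hω : ω ∈ A t
      · rw [if_pos ((hAT t ω).mp hω), Set.indicator_of_mem hω]
      · rw [if_neg (fun hc => hω ((hAT t ω).mpr hc)), Set.indicator_of_notMem hω]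
    calc ∫⁻ ω, (T ω : ℝ≥0∞) ∂μ
        = ∫⁻ ω, ∑' t : ℕ, (A t).indicator (fun _ => (1:ℝ≥0∞)) ω ∂μ := by
          exact lintegral_congr hpt
      _ = ∑' t : ℕ, ∫⁻ ω, (A t).indicator (fun _ => (1:ℝ≥0∞)) ω ∂μ :=
          lintegral_tsum (fun t => (measurable_const.indicator (hA_meas t)).aemeasurable)
      _ = ∑' t : ℕ, μ (A t) := by
          apply tsum_congr
          intro t
          rw [lintegral_indicator (hA_meas t), setLIntegral_one]
  -- conclude
  rw [hTsum, ENNReal.tsum_eq_iSup_sum]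
  have hfinal : ENNReal.ofReal (((n:ℝ)/2) * gpot h z₀)
      = ENNReal.ofReal (((n : ℝ) / 2) * (1 + Real.log ((z₀ : ℝ) - (n : ℝ) / 2))) := by
    congr 1
    unfold gpot
    rw [if_pos (by omega : h < z₀), hhR]
  rw [← hfinal]
  apply iSup_le
  intro s
  obtain ⟨N, hN⟩ : ∃ N, s ⊆ Finset.range N := ⟨(s.sup id) + 1, by
    intro x hx
    simp only [Finset.mem_range]
    exact Nat.lt_succ_of_le (Finset.le_sup (f := id) hx)⟩
  calc ∑ t ∈ s, μ (A t) ≤ ∑ t ∈ Finset.range N, μ (A t) :=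
        Finset.sum_le_sum_of_subset hN
    _ ≤ ENNReal.ofReal (((n:ℝ)/2) * gpot h z₀) := partial_bound N
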